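/- Let M be a semifinite von Neumann algebra with faithful normal trace τ and let A be a *-regular subalgebra of S(M) containing the unit. Then for every a ∈ A, the left support l(a) and the right support r(a) belong to A. -/

import Mathlib

/-- `e` is the right support of `a` in a `*`-ring: the smallest self-adjoint idempotent
(projection) `e` with `a * e = a` (for `a = v|a|`, `r(a) = v*v`). -/
def IsRightSupport {S : Type*} [Ring S] [StarRing S] (a e : S) : Prop :=
  e * e = e ∧ star e = e ∧ a * e = a ∧
    ∀ q : S, q * q = q → star q = q → a * q = a → e * q = e

/-- `f` is the left support of `a` in a `*`-ring: the smallest projection `f`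
with `f * a = a` (for `a = v|a|`, `l(a) = v v*`). -/
def IsLeftSupport {S : Type*} [Ring S] [StarRing S] (a f : S) : Prop :=
  f * f = f ∧ star f = f ∧ f * a = a ∧
    ∀ q : S, q * q = q → star q = q → q * a = a → q * f = f

section Aux
variable {S : Type*} [Ring S] [StarRing S] (A : Subring S)

lemma exists_sym_inv (hstar : ∀ x ∈ A, star x ∈ A)
    (hreg : ∀ x ∈ A, ∃ b ∈ A, x * b * x = x)
    {h : S} (hhA : h ∈ A) (hhs : star h = h) :
    ∃ c ∈ A, star c = c ∧ h * c * h = h := by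
  obtain ⟨b, hbA, hb⟩ := hreg h hhA
  refine ⟨b * h * star b, A.mul_mem (A.mul_mem hbA hhA) (hstar b hbA), ?_, ?_⟩
  · simp [star_mul, hhs, mul_assoc]
  · calc h * (b * h * star b) * h = (h * b * h) * (star b * h) := by
          simp [mul_assoc]
      _ = h * (star b * h) := by rw [hb]
      _ = star (star h * b * h) := by simp [star_mul, hhs, mul_assoc]
      _ = h := by rw [hhs, hb, hhs]

lemma key1 (hstar : ∀ x ∈ A, star x ∈ A)
    (hproper : ∀ c ∈ A, star c * c = 0 → c = 0)
    {x c : S} (hxA : x ∈ A) (hcA : c ∈ A) (hcs : star c = c)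
    (hch : (star x * x) * c * (star x * x) = star x * x) :
    x * (c * (star x * x)) = x := by
  set h := star x * x with hh
  set q := c * h with hq
  have hstarq : star q = h * c := by
    simp [hq, hh, star_mul, hcs, mul_assoc]
  have t1 : star x * (x * q) = h := by
    calc star x * (x * q) = h * c * h := by simp [hq, hh, mul_assoc]
      _ = h := hch
  have t3 : star (x * q) * (x * q) = h := by
    calc star (x * q) * (x * q) = (h * c * h) * (c * h) := by
          simp [star_mul, hstarq, hq, hh, hcs, mul_assoc]
      _ = h * (c * h) := by rw [hch]
      _ = h := by rw [← mul_assoc]; exact hch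
  have t2 : star (x * q) * x = star x * x := by
    calc star (x * q) * x = h * (c * h) := by
          simp [star_mul, hstarq, hh, mul_assoc]
      _ = h := by rw [← mul_assoc]; exact hch
      _ = star x * x := hh
  have key : star (x - x * q) * (x - x * q) = 0 := by
    rw [star_sub, sub_mul, mul_sub, mul_sub, t1, t3, t2, hh]
    abel
  have hqA : q ∈ A := A.mul_mem hcA (A.mul_mem (hstar x hxA) hxA)
  have := hproper _ (A.sub_mem hxA (A.mul_mem hxA hqA)) key
  have hx : x * q = x := by
    have := sub_eq_zero.mp this
    exact this.symm
  simpa [hq] using hx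

/-- dual version: `(x x*) d (x x*) = x x*`, `d` self-adjoint implies `x x* d x = x`. -/
lemma key2 (hstar : ∀ x ∈ A, star x ∈ A)
    (hproper : ∀ c ∈ A, star c * c = 0 → c = 0)
    {x d : S} (hxA : x ∈ A) (hdA : d ∈ A) (hds : star d = d)
    (hdh : (x * star x) * d * (x * star x) = x * star x) :
    (x * star x) * (d * x) = x := by
  have hxsA : star x ∈ A := hstar x hxA
  have h1 : star (star x) * star x = x * star x := by simp
  have := key1 A hstar hproper hxsA hdA hds (by rw [h1]; exact hdh)
  rw [h1] at this
  have := congrArg star this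
  simpa [star_mul, hds, mul_assoc] using this

/-- the right support of an element of a `*`-regular subring belongs to the subring -/
lemma rsupp_mem (hstar : ∀ x ∈ A, star x ∈ A)
    (hreg : ∀ x ∈ A, ∃ b ∈ A, x * b * x = x)
    (hproper : ∀ c ∈ A, star c * c = 0 → c = 0)
    {a e : S} (ha : a ∈ A) (he : IsRightSupport a e) : e ∈ A := by
  obtain ⟨hee, hes, hae, hemin⟩ := he
  set h := star a * a with hh
  have hhA : h ∈ A := A.mul_mem (hstar a ha) ha
  have hhs : star h = h := by simp [hh, star_mul]
  obtain ⟨c, hcA, hcs, hch⟩ := exists_sym_inv A hstar hreg hhA hhs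
  set q := c * h with hq
  have hqA : q ∈ A := A.mul_mem hcA hhA
  have haq : a * q = a := by
    have := key1 A hstar hproper ha hcA hcs (by rw [← hh]; exact hch)
    simpa [hq, hh] using this
  have hqq : q * q = q := by
    calc q * q = c * (h * c * h) := by simp [hq, mul_assoc]
      _ = q := by rw [hch]
  -- q absorbs anything with a * r = a on the right
  have habs : ∀ r : S, a * r = a → q * r = q := by
    intro r har
    calc q * r = c * (star a * (a * r)) := by simp [hq, hh, mul_assoc]
      _ = q := by rw [har]
  -- build a projection from q
  set k := q * star q with hk
  have hkA : k ∈ A := A.mul_mem hqA (hstar q hqA)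
  have hks : star k = k := by simp [hk, star_mul]
  obtain ⟨d, hdA, hds, hdk⟩ := exists_sym_inv A hstar hreg hkA hks
  have hkdq : (q * star q) * (d * q) = q := key2 A hstar hproper hqA hdA hds (by rw [← hk]; exact hdk)
  set p := star q * (d * q) with hp
  have hpA : p ∈ A := A.mul_mem (hstar q hqA) (A.mul_mem hdA hqA)
  have hps : star p = p := by simp [hp, star_mul, hds, mul_assoc]
  have hqp : q * p = q := by
    calc q * p = (q * star q) * (d * q) := by simp [hp, mul_assoc]
      _ = q := hkdq
  have hpp : p * p = p := by
    calc p * p = star q * (d * ((q * star q) * (d * q))) := by simp [hp, mul_assoc]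
      _ = p := by rw [hkdq, hp]
  have hap : a * p = a := by
    conv_lhs => rw [← haq]
    rw [mul_assoc, hqp, haq]
  -- p also absorbs anything with a * r = a on the right
  have hpabs : ∀ r : S, a * r = a → p * r = p := by
    intro r har
    calc p * r = star q * (d * (q * r)) := by simp [hp, mul_assoc]
      _ = p := by rw [habs r har, hp]
  -- now e = p
  have h1 : e * p = e := hemin p hpp hps hap
  have h2 : p * e = p := hpabs e hae
  have h3 : p * e = e := by
    have := congrArg star h1
    simpa [star_mul, hps, hes] using this
  have : e = p := by rw [← h3, h2]
  rw [this]; exact hpA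

end Aux

/-- Let `S` be a `*`-ring (playing the role of `S(M)`, the measurable operators affiliated
with a semifinite von Neumann algebra) and `A ⊆ S` a unital `*`-regular subalgebra:
`A` is star-closed, von Neumann regular, and the involution is proper on `A`.
Then for every `a ∈ A`, the left support `l(a)` and the right support `r(a)`
(taken in `S`) belong to `A`. -/
theorem stmt_10 {S : Type*} [Ring S] [StarRing S] (A : Subring S)
    (hstar : ∀ x ∈ A, star x ∈ A)
    (hreg : ∀ x ∈ A, ∃ b ∈ A, x * b * x = x)
    (hproper : ∀ c ∈ A, star c * c = 0 → c = 0)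
    (a e f : S) (ha : a ∈ A)
    (he : IsRightSupport a e) (hf : IsLeftSupport a f) :
    e ∈ A ∧ f ∈ A := by
  refine ⟨rsupp_mem A hstar hreg hproper ha he, ?_⟩
  refine rsupp_mem A hstar hreg hproper (hstar a ha) ?_
  obtain ⟨hff, hfs, hfa, hfmin⟩ := hf
  refine ⟨hff, hfs, ?_, ?_⟩
  · have := congrArg star hfa
    simpa [star_mul, hfs] using this
  · intro q hqq hqs haq
    have hqa : q * a = a := by
      have := congrArg star haq
      simpa [star_mul, hqs] using this
    have := congrArg star (hfmin q hqq hqs hqa)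
    simpa [star_mul, hqs, hfs] using this
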